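/- Let X be a metric space, let α ≥ 0, C > 0 and R > 0. Assume that for every x ∈ X the closed structure of the ball is uniformly controlled, namely dim_A(B(x,R),C,R) ≤ α: for all 0 < r < R' < R and every point y of the metric subspace B(x,R), the ball of radius R' around y in B(x,R) can be covered by at most C(R'/r)^α balls of radius r with centers in B(x,R). Then the linearly controlled dimension of X is at most ⌊α⌋: there exist c > 0 and s₀ > 0 such that for all 0 < s < s₀ the space X admits a cover 𝒰 = ⋃_{k=0}^{⌊α⌋} 𝒰_k in which every member has diameter at most s and each family 𝒰_k is cs-separated. -/

import Mathlib

open Metric Set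

/-- The set `A` in a space with distance function `d` has Nagata dimension at most `n`
with constant `c` at scale `s` (written `dim_N(A,c,s) ≤ n` in the paper): there is a
cover `𝒰 = ⋃_{k=0}^n 𝒰 k` of `A` by subsets of `A`, each member having diameter at
most `s`, such that each family `𝒰 k` is `c*s`-separated. -/
def dimNle {X : Type*} (d : X → X → ℝ) (A : Set X) (c s : ℝ) (n : ℕ) : Prop :=
  ∃ 𝒰 : Fin (n + 1) → Set (Set X),
    (∀ k, ∀ U ∈ 𝒰 k, U ⊆ A) ∧
    (∀ p ∈ A, ∃ k, ∃ U ∈ 𝒰 k, p ∈ U) ∧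
    (∀ k, ∀ U ∈ 𝒰 k, ∀ a ∈ U, ∀ b ∈ U, d a b ≤ s) ∧
    (∀ k, ∀ U ∈ 𝒰 k, ∀ V ∈ 𝒰 k, U ≠ V → ∀ a ∈ U, ∀ b ∈ V, c * s ≤ d a b)

/-- `dimAle d A C Rbar β` (written `dim_A(A,C,Rbar) ≤ β` in the paper): for all
`0 < r < R < Rbar` and every `x ∈ A`, the ball of radius `R` around `x` in `A` can be
covered by at most `C * (R/r)^β` balls of radius `r` with centers in `A`. -/
def dimAle {X : Type*} (d : X → X → ℝ) (A : Set X) (C Rbar β : ℝ) : Prop :=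
  ∀ r R : ℝ, 0 < r → r < R → R < Rbar → ∀ x ∈ A,
    ∃ T : Finset X, ↑T ⊆ A ∧ (T.card : ℝ) ≤ C * (R / r) ^ β ∧
      ∀ z ∈ A, d z x < R → ∃ t ∈ T, d z t < r

/-- `d` is a metric distance function on `Y`: symmetric, triangle inequality, and
vanishing exactly on the diagonal. -/
def IsMetricDist {Y : Type*} (d : Y → Y → ℝ) : Prop :=
  (∀ a b, d a b = d b a) ∧ (∀ a b c, d a c ≤ d a b + d b c) ∧ (∀ a b, d a b = 0 ↔ a = b)

/-- An `ε`-coupling between the pointed spaces `(A, dA, a₀)` and `(B, dB, b₀)`: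
a pseudometric on the disjoint union extending `dA` and `dB`, with `d(a₀,b₀) ≤ ε`,
every point of `B_A(a₀,1/ε)` within distance `< ε` of a point of `B`, and every point
of `B_B(b₀,1/ε)` within distance `< ε` of a point of `A`. -/
def IsCoupling {A B : Type*} (dA : A → A → ℝ) (dB : B → B → ℝ) (a₀ : A) (b₀ : B)
    (ε : ℝ) (d : A ⊕ B → A ⊕ B → ℝ) : Prop :=
  (∀ p q, d p q = d q p) ∧
  (∀ p, d p p = 0) ∧
  (∀ p q r, d p r ≤ d p q + d q r) ∧
  (∀ u v : A, d (Sum.inl u) (Sum.inl v) = dA u v) ∧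
  (∀ u v : B, d (Sum.inr u) (Sum.inr v) = dB u v) ∧
  d (Sum.inl a₀) (Sum.inr b₀) ≤ ε ∧
  (∀ u : A, dA u a₀ < 1 / ε → ∃ v : B, d (Sum.inl u) (Sum.inr v) < ε) ∧
  (∀ v : B, dB v b₀ < 1 / ε → ∃ u : A, d (Sum.inl u) (Sum.inr v) < ε)

open Relation

namespace LcDimAux


variable {X : Type*} [MetricSpace X] {α C R : ℝ}

/-- One step of a `δ`-chain inside `W`. -/
def Step (δ : ℝ) (W : Set X) (p q : X) : Prop := p ∈ W ∧ q ∈ W ∧ dist p q < δ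

/-- `δ`-chain connectivity inside `W`. -/
def Rel (δ : ℝ) (W : Set X) : X → X → Prop := ReflTransGen (Step δ W)

/-- The chain component of `a` in `W`. -/
def cpt (δ : ℝ) (W : Set X) (a : X) : Set X := {b | Rel δ W a b}

lemma step_symm {δ : ℝ} {W : Set X} : Symmetric (Step δ W) := by
  intro p q h
  exact ⟨h.2.1, h.1, by rw [dist_comm]; exact h.2.2⟩

lemma rel_symm {δ : ℝ} {W : Set X} {a b : X} (h : Rel δ W a b) : Rel δ W b a :=
  have : Std.Symm (Step δ W) := ⟨fun _ _ hh => step_symm hh⟩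
  (ReflTransGen.stdSymm (r := Step δ W)).symm _ _ h

lemma mem_cpt_self (δ : ℝ) (W : Set X) (a : X) : a ∈ cpt δ W a := ReflTransGen.refl

lemma cpt_subset {δ : ℝ} {W : Set X} {a : X} (ha : a ∈ W) : cpt δ W a ⊆ W := by
  intro b hb
  induction hb with
  | refl => exact ha
  | tail _ h2 _ => exact h2.2.1

lemma cpt_eq_of_rel {δ : ℝ} {W : Set X} {a b : X} (h : Rel δ W a b) :
    cpt δ W a = cpt δ W b := by
  ext x
  exact ⟨fun hx => (rel_symm h).trans hx, fun hx => h.trans hx⟩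

lemma cpt_sep {δ : ℝ} {W : Set X} {a b x y : X} (ha : a ∈ W) (hb : b ∈ W)
    (hne : cpt δ W a ≠ cpt δ W b) (hx : x ∈ cpt δ W a) (hy : y ∈ cpt δ W b) :
    δ ≤ dist x y := by
  by_contra hlt
  push_neg at hlt
  have hxW : x ∈ W := cpt_subset ha hx
  have hyW : y ∈ W := cpt_subset hb hy
  have hab : Rel δ W a b :=
    (hx.trans (ReflTransGen.single ⟨hxW, hyW, hlt⟩)).trans (rel_symm hy)
  exact hne (cpt_eq_of_rel hab)

/-- Along a chain one finds points with distance to the start in any window of width `δ`. -/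
lemma reach {δ : ℝ} (hδ : 0 < δ) {W : Set X} {a b : X} (h : Rel δ W a b) :
    ∀ v : ℝ, 0 ≤ v → v ≤ dist a b → ∃ p, Rel δ W a p ∧ v ≤ dist a p ∧ dist a p < v + δ := by
  induction h with
  | refl =>
    intro v h0 hv
    refine ⟨a, ReflTransGen.refl, ?_, ?_⟩
    · simpa [dist_self] using hv
    · simp only [dist_self]
      have : v = 0 := le_antisymm (by simpa [dist_self] using hv) h0
      simpa [this] using hδ
  | @tail p q hap hpq ih =>
    intro v h0 hv
    rcases le_or_gt v (dist a p) with hle | hgt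
    · exact ih v h0 hle
    · refine ⟨q, hap.tail hpq, hv, ?_⟩
      calc dist a q ≤ dist a p + dist p q := dist_triangle a p q
      _ < v + δ := by
        have := hpq.2.2
        linarith

/-- Chains inside `W'` avoiding a shell around `z` cannot escape the shell. -/
lemma confine {δ : ℝ} (hδ : 0 < δ) {W' : Set X} {z : X} {t₀ : ℝ}
    (hsh : ∀ x ∈ W', ¬(t₀ ≤ dist x z ∧ dist x z < t₀ + 2 * δ))
    {a b : X} (ha : dist a z < t₀) (h : Rel δ W' a b) : dist b z < t₀ := by
  induction h with
  | refl => exact ha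
  | @tail p q hap hpq ih =>
    by_contra hge
    push_neg at hge
    have h1 : dist q z ≤ dist q p + dist p z := dist_triangle q p z
    have h2 : dist q p < δ := by rw [dist_comm]; exact hpq.2.2
    exact hsh q hpq.2.1 ⟨hge, by linarith⟩

/-- Maximal `r`-separated nets exist (Zorn). -/
lemma net (W : Set X) (r : ℝ) (hr : 0 < r) :
    ∃ N : Set X, N ⊆ W ∧ (∀ z ∈ N, ∀ z' ∈ N, z ≠ z' → r ≤ dist z z') ∧
      ∀ a ∈ W, ∃ z ∈ N, dist a z < r := by
  set 𝒮 : Set (Set X) :=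
    {N | N ⊆ W ∧ ∀ z ∈ N, ∀ z' ∈ N, z ≠ z' → r ≤ dist z z'} with h𝒮
  have hub : ∀ c ⊆ 𝒮, IsChain (· ⊆ ·) c → ∃ ub ∈ 𝒮, ∀ s ∈ c, s ⊆ ub := by
    intro c hc hchain
    refine ⟨⋃₀ c, ⟨?_, ?_⟩, fun s hs => subset_sUnion_of_mem hs⟩
    · rintro x ⟨s, hs, hxs⟩
      exact (hc hs).1 hxs
    · rintro z ⟨s, hs, hzs⟩ z' ⟨s', hs', hz's'⟩ hne
      rcases eq_or_ne s s' with rfl | hss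
      · exact (hc hs).2 z hzs z' hz's' hne
      · rcases hchain hs hs' hss with h | h
        · exact (hc hs').2 z (h hzs) z' hz's' hne
        · exact (hc hs).2 z hzs z' (h hz's') hne
  obtain ⟨N, hN⟩ := zorn_subset 𝒮 hub
  refine ⟨N, hN.prop.1, hN.prop.2, ?_⟩
  intro a ha
  by_contra hcon
  push_neg at hcon
  have haN : a ∉ N := by
    intro h
    have := hcon a h
    simp [dist_self] at this
    linarith
  have hmem : insert a N ∈ 𝒮 := by
    constructor
    · exact insert_subset ha hN.prop.1
    · rintro z (rfl | hz) z' (rfl | hz') hne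
      · exact absurd rfl hne
      · exact hcon z' hz'
      · rw [dist_comm]; exact hcon z hz
      · exact hN.prop.2 z hz z' hz' hne
  have := hN.2 hmem (subset_insert a N)
  exact haN (this (mem_insert a N))





/-- Packing bound: an `r'`-separated subset of a ball of radius `ρ` has at most
`max C 1 * (4ρ/r')^α` elements. -/
lemma pack (hα : 0 ≤ α) (hC : 0 < C) (hR : 0 < R)
    (hA : ∀ x : X, dimAle (fun a b : X => dist a b) (Metric.ball x R) C R α)
    {r' ρ : ℝ} (hr' : 0 < r') (hrρ : r' ≤ ρ) (hρR : 2 * ρ < R)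
    (y : X) (S : Finset X) (hS : ∀ x ∈ S, x ∈ ball y ρ)
    (hsep : ∀ x ∈ S, ∀ x' ∈ S, x ≠ x' → r' ≤ dist x x') :
    (S.card : ℝ) ≤ (max C 1) * (4 * ρ / r') ^ α := by
  have hρ : 0 < ρ := lt_of_lt_of_le hr' hrρ
  have hρR' : ρ < R := by linarith
  obtain ⟨T, hTA, hTcard, hTcov⟩ :=
    hA y (r' / 2) (2 * ρ) (by positivity) (by linarith) hρR y (mem_ball_self hR)
  have key : ∀ z ∈ S, ∃ t, t ∈ T ∧ dist z t < r' / 2 := by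
    intro z hz
    have hz1 : z ∈ ball y R := by
      have := hS z hz
      exact ball_subset_ball (le_of_lt hρR') this
    have hz2 : dist z y < 2 * ρ := by
      have := hS z hz
      rw [mem_ball] at this
      linarith
    obtain ⟨t, ht, hdt⟩ := hTcov z hz1 hz2
    exact ⟨t, ht, hdt⟩
  choose! g hg1 hg2 using key
  have hinj : Set.InjOn g ↑S := by
    intro z hz z' hz' hgz
    by_contra hne
    have h1 := hg2 z hz
    have h2 := hg2 z' hz'
    have hs := hsep z hz z' hz' hne
    have : dist z z' ≤ dist z (g z) + dist (g z') z' := by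
      rw [hgz]
      have := dist_triangle z (g z') z'
      linarith [dist_comm (g z') z' ▸ this]
    have h3 : dist (g z') z' < r' / 2 := by rw [dist_comm]; exact h2
    linarith
  have hcard : S.card ≤ T.card :=
    Finset.card_le_card_of_injOn g (fun z hz => hg1 z hz) hinj
  have heq : (2 * ρ) / (r' / 2) = 4 * ρ / r' := by
    field_simp
    ring
  calc (S.card : ℝ) ≤ (T.card : ℝ) := by exact_mod_cast hcard
    _ ≤ C * (2 * ρ / (r' / 2)) ^ α := hTcard
    _ = C * (4 * ρ / r') ^ α := by rw [heq]
    _ ≤ (max C 1) * (4 * ρ / r') ^ α := by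
        apply mul_le_mul_of_nonneg_right (le_max_left C 1)
        positivity

/-- Packing with an explicit bound on the radius ratio. -/
lemma packb (hα : 0 ≤ α) (hC : 0 < C) (hR : 0 < R)
    (hA : ∀ x : X, dimAle (fun a b : X => dist a b) (Metric.ball x R) C R α)
    {r' ρ β : ℝ} (hr' : 0 < r') (hrρ : r' ≤ ρ) (hρR : 2 * ρ < R)
    (hβ : 4 * ρ ≤ β * r')
    (y : X) (S : Finset X) (hS : ∀ x ∈ S, x ∈ ball y ρ)
    (hsep : ∀ x ∈ S, ∀ x' ∈ S, x ≠ x' → r' ≤ dist x x') :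
    (S.card : ℝ) ≤ (max C 1) * β ^ α := by
  have hρ : 0 < ρ := lt_of_lt_of_le hr' hrρ
  have h1 := pack hα hC hR hA hr' hrρ hρR y S hS hsep
  have h2 : (4 * ρ / r' : ℝ) ≤ β := by
    rw [div_le_iff₀ hr']
    exact hβ
  calc (S.card : ℝ) ≤ (max C 1) * (4 * ρ / r') ^ α := h1
    _ ≤ (max C 1) * β ^ α := by
        apply mul_le_mul_of_nonneg_left _ (le_trans zero_le_one (le_max_right C 1))
        exact Real.rpow_le_rpow (by positivity) h2 hα





/-- `S` is `δ`-separated. -/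
def Sep (δ : ℝ) (S : Finset X) : Prop := ∀ x ∈ S, ∀ x' ∈ S, x ≠ x' → δ ≤ dist x x'

/-- Every `δ`-separated subset of `W` inside a ball of radius `b` has at most `D` points. -/
def Light (δ b : ℝ) (W : Set X) (D : ℝ) : Prop :=
  ∀ (y : X) (S : Finset X), (∀ x ∈ S, x ∈ W ∧ x ∈ ball y b) → Sep δ S → (S.card : ℝ) ≤ D


/-- Counting points of a `D`-light set in a ball of radius `ρ`. -/
lemma count (hα : 0 ≤ α) (hC : 0 < C) (hR : 0 < R)
    (hA : ∀ x : X, dimAle (fun a b : X => dist a b) (Metric.ball x R) C R α)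
    {δ b ρ β D : ℝ} (hδ : 0 < δ) (hb : 0 < b) (hbρ : b ≤ ρ) (hρR : 2 * ρ < R)
    (hβ : 4 * ρ ≤ β * b) {W : Set X} (hL : Light δ b W D)
    (y : X) (S : Finset X) (hS : ∀ x ∈ S, x ∈ W ∧ x ∈ ball y ρ)
    (hsep : Sep δ S) :
    (S.card : ℝ) ≤ (max C 1) * β ^ α * D := by
  classical
  have hD0 : 0 ≤ D := by
    have := hL y ∅ (by simp) (by intro x hx; simp at hx)
    simpa using this
  set PP : Finset (Finset X) := S.powerset.filter (fun F => Sep b F) with hPP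
  have hemp : ∅ ∈ PP := by
    simp only [hPP, Finset.mem_filter, Finset.empty_mem_powerset, true_and]
    intro x hx
    simp at hx
  obtain ⟨F, hFPP, hFmax⟩ := Finset.exists_maximal (s := PP) ⟨∅, hemp⟩
  change F ∈ PP at hFPP
  rw [hPP, Finset.mem_filter, Finset.mem_powerset] at hFPP
  obtain ⟨hFS, hFsep⟩ := hFPP
  have hcover : ∀ x ∈ S, ∃ w, w ∈ F ∧ dist x w < b := by
    intro x hx
    by_contra hcon
    push_neg at hcon
    have hxF : x ∉ F := by
      intro hxF
      have := hcon x hxF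
      simp [dist_self] at this
      linarith
    have hmem : insert x F ∈ PP := by
      rw [hPP, Finset.mem_filter, Finset.mem_powerset]
      refine ⟨Finset.insert_subset hx hFS, ?_⟩
      intro z hz z' hz' hne
      rcases Finset.mem_insert.1 hz with rfl | hzF
      · rcases Finset.mem_insert.1 hz' with rfl | hz'F
        · exact absurd rfl hne
        · exact hcon z' hz'F
      · rcases Finset.mem_insert.1 hz' with rfl | hz'F
        · rw [dist_comm]; exact hcon z hzF
        · exact hFsep z hzF z' hz'F hne
    exact hxF (hFmax hmem (Finset.subset_insert x F) (Finset.mem_insert_self x F))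
  choose! ψ hψF hψd using hcover
  have hfib := Finset.card_eq_sum_card_fiberwise (f := ψ) (s := S) (t := F)
    (fun x hx => hψF x hx)
  have hfibb : ∀ w ∈ F, ((S.filter (fun x => ψ x = w)).card : ℝ) ≤ D := by
    intro w hw
    apply hL w
    · intro x hx
      rw [Finset.mem_filter] at hx
      refine ⟨(hS x hx.1).1, ?_⟩
      rw [mem_ball, ← hx.2]
      exact hψd x hx.1
    · intro x hx x' hx' hne
      rw [Finset.mem_filter] at hx hx'
      exact hsep x hx.1 x' hx'.1 hne
  have hFcard : (F.card : ℝ) ≤ (max C 1) * β ^ α := by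
    refine packb hα hC hR hA hb hbρ hρR hβ y F (fun x hx => (hS x (hFS hx)).2) ?_
    intro x hx x' hx' hne
    exact hFsep x hx x' hx' hne
  calc (S.card : ℝ) = ∑ w ∈ F, ((S.filter (fun x => ψ x = w)).card : ℝ) := by
        rw [hfib]; push_cast; ring
    _ ≤ ∑ _w ∈ F, D := Finset.sum_le_sum hfibb
    _ = (F.card : ℝ) * D := by rw [Finset.sum_const, nsmul_eq_mul]
    _ ≤ (max C 1) * β ^ α * D := mul_le_mul_of_nonneg_right hFcard hD0

/-- Among `M` candidate shells around `z`, one is light. -/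
lemma light_shell (hα : 0 ≤ α) (hC : 0 < C) (hR : 0 < R)
    (hA : ∀ x : X, dimAle (fun a b : X => dist a b) (Metric.ball x R) C R α)
    (M : ℕ) (hM : 1 ≤ M) {δ : ℝ} (hδ : 0 < δ) (hscale : 36 * (M : ℝ) * δ < R)
    {W : Set X} {D : ℝ} (hL : Light δ (3 * (M : ℝ) * δ) W D) (z : X) :
    ∃ i : ℕ, i < M ∧ Light δ (3 * (M : ℝ) * δ)
      {x | x ∈ W ∧ dist x z ∈ Ico (4 * (M : ℝ) * δ + 4 * (i : ℝ) * δ)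
        (4 * (M : ℝ) * δ + 4 * (i : ℝ) * δ + 2 * δ)}
      ((max C 1) * 12 ^ α * D / M) := by
  classical
  have hMR : (1 : ℝ) ≤ (M : ℝ) := by exact_mod_cast hM
  by_contra hcon
  push_neg at hcon
  have h' : ∀ i : ℕ, i < M → ∃ (y : X) (S : Finset X),
      (∀ x ∈ S, (x ∈ W ∧ dist x z ∈ Ico (4 * (M : ℝ) * δ + 4 * (i : ℝ) * δ)
        (4 * (M : ℝ) * δ + 4 * (i : ℝ) * δ + 2 * δ)) ∧ x ∈ ball y (3 * (M : ℝ) * δ)) ∧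
      Sep δ S ∧ (max C 1) * 12 ^ α * D / M < S.card := by
    intro i hi
    have h1 := hcon i hi
    unfold Light at h1
    push_neg at h1
    obtain ⟨y, S, hS1, hS2, hS3⟩ := h1
    exact ⟨y, S, hS1, hS2, hS3⟩
  choose yw Sw hmem hsep hbig using h'
  set U : Finset X :=
    (Finset.range M).attach.biUnion (fun i => Sw i.1 (Finset.mem_range.1 i.2)) with hU
  have hdist : ∀ (i : ℕ) (hi : i < M), ∀ x ∈ Sw i hi,
      4 * (M : ℝ) * δ + 4 * (i : ℝ) * δ ≤ dist x z ∧
      dist x z < 4 * (M : ℝ) * δ + 4 * (i : ℝ) * δ + 2 * δ := by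
    intro i hi x hx
    have := (hmem i hi x hx).1.2
    exact ⟨this.1, this.2⟩
  have hdisj : ∀ (i : { x // x ∈ Finset.range M }) (_ : i ∈ (Finset.range M).attach)
      (j : { x // x ∈ Finset.range M }) (_ : j ∈ (Finset.range M).attach), i ≠ j →
      Disjoint (Sw i.1 (Finset.mem_range.1 i.2)) (Sw j.1 (Finset.mem_range.1 j.2)) := by
    intro i _ j _ hne
    rw [Finset.disjoint_left]
    intro x hxi hxj
    have hij : (i.1 : ℕ) ≠ j.1 := fun h => hne (Subtype.ext h)
    have h1 := hdist i.1 (Finset.mem_range.1 i.2) x hxi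
    have h2 := hdist j.1 (Finset.mem_range.1 j.2) x hxj
    rcases lt_or_gt_of_ne hij with h | h
    · have : (i.1 : ℝ) + 1 ≤ (j.1 : ℝ) := by exact_mod_cast h
      nlinarith [h1.2, h2.1, hδ]
    · have : (j.1 : ℝ) + 1 ≤ (i.1 : ℝ) := by exact_mod_cast h
      nlinarith [h2.2, h1.1, hδ]
  have hcardU : U.card = ∑ i ∈ (Finset.range M).attach, (Sw i.1 (Finset.mem_range.1 i.2)).card :=
    Finset.card_biUnion hdisj
  have hUsep : Sep δ U := by
    intro x hx x' hx' hne
    rw [hU, Finset.mem_biUnion] at hx hx'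
    obtain ⟨i, _, hxi⟩ := hx
    obtain ⟨j, _, hxj⟩ := hx'
    rcases eq_or_ne i j with rfl | hij
    · exact hsep i.1 (Finset.mem_range.1 i.2) x hxi x' hxj hne
    · have hijn : (i.1 : ℕ) ≠ j.1 := fun h => hij (Subtype.ext h)
      have h1 := hdist i.1 (Finset.mem_range.1 i.2) x hxi
      have h2 := hdist j.1 (Finset.mem_range.1 j.2) x' hxj
      have habs := abs_dist_sub_le x x' z
      rcases lt_or_gt_of_ne hijn with h | h
      · have hc : (i.1 : ℝ) + 1 ≤ (j.1 : ℝ) := by exact_mod_cast h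
        have : dist x' z - dist x z ≤ dist x x' := by
          have := abs_le.1 habs
          linarith [this.1]
        nlinarith [h1.2, h2.1, hδ]
      · have hc : (j.1 : ℝ) + 1 ≤ (i.1 : ℝ) := by exact_mod_cast h
        have : dist x z - dist x' z ≤ dist x x' := by
          have := abs_le.1 habs
          linarith [(abs_le.1 habs).2]
        nlinarith [h2.2, h1.1, hδ]
  have hUball : ∀ x ∈ U, x ∈ W ∧ x ∈ ball z (9 * (M : ℝ) * δ) := by
    intro x hx
    rw [hU, Finset.mem_biUnion] at hx
    obtain ⟨i, _, hxi⟩ := hx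
    have h1 := (hmem i.1 (Finset.mem_range.1 i.2) x hxi).1.1
    have h2 := hdist i.1 (Finset.mem_range.1 i.2) x hxi
    have hiM : (i.1 : ℝ) ≤ (M : ℝ) - 1 := by
      have : (i.1 : ℕ) + 1 ≤ M := Finset.mem_range.1 i.2
      have := (Nat.cast_le (α := ℝ)).2 this
      push_cast at this
      linarith
    refine ⟨h1, ?_⟩
    rw [mem_ball]
    nlinarith [h2.2, hδ, hMR]
  have hcount : (U.card : ℝ) ≤ (max C 1) * 12 ^ α * D := by
    refine count hα hC hR hA hδ (by positivity) ?_ ?_ ?_ hL z U hUball hUsep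
    · nlinarith
    · nlinarith
    · nlinarith
  have hMne : (M : ℝ) ≠ 0 := by positivity
  have hbigsum : (max C 1) * 12 ^ α * D < (U.card : ℝ) := by
    have hne : ((Finset.range M).attach).Nonempty := by
      rw [Finset.attach_nonempty_iff]
      exact Finset.nonempty_range_iff.2 (by omega)
    have hlt : ∑ i ∈ (Finset.range M).attach, ((max C 1) * 12 ^ α * D / M) <
        ∑ i ∈ (Finset.range M).attach, ((Sw i.1 (Finset.mem_range.1 i.2)).card : ℝ) := by
      apply Finset.sum_lt_sum_of_nonempty hne
      intro i _
      exact hbig i.1 (Finset.mem_range.1 i.2)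
    have hsum1 : ∑ _i ∈ (Finset.range M).attach, ((max C 1) * 12 ^ α * D / M)
        = (max C 1) * 12 ^ α * D := by
      rw [Finset.sum_const, Finset.card_attach, Finset.card_range, nsmul_eq_mul]
      field_simp
    have hsum2 : ((U.card : ℕ) : ℝ)
        = ∑ i ∈ (Finset.range M).attach, ((Sw i.1 (Finset.mem_range.1 i.2)).card : ℝ) := by
      rw [hcardU]
      push_cast
      ring
    rw [hsum2]
    rw [hsum1] at hlt
    exact hlt
  linarith


set_option maxHeartbeats 1000000 in
/-- The main recursive construction: a `D`-light set `W` admits a cover by `k+1`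
families of `δ`-separated sets of diameter at most `16Mδ`, provided the density
cascade terminates. -/
lemma main_construction [Nonempty X] (hα : 0 ≤ α) (hC : 0 < C) (hR : 0 < R)
    (hA : ∀ x : X, dimAle (fun a b : X => dist a b) (Metric.ball x R) C R α)
    (M : ℕ) (hM : 1 ≤ M) {δ : ℝ} (hδ : 0 < δ) (hscale : 36 * (M : ℝ) * δ < R) :
    ∀ (k : ℕ) (W : Set X) (D : ℝ), Light δ (3 * (M : ℝ) * δ) W D →
      (max C 1) * 24 ^ α * ((((max C 1) * 12 ^ α) ^ 2 / M) ^ k * D) ≤ 8 * M →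
      ∃ 𝒰 : Fin (k + 1) → Set (Set X),
        (∀ j, ∀ U ∈ 𝒰 j, U ⊆ W) ∧
        (∀ p ∈ W, ∃ j, ∃ U ∈ 𝒰 j, p ∈ U) ∧
        (∀ j, ∀ U ∈ 𝒰 j, ∀ a ∈ U, ∀ b ∈ U, dist a b ≤ 16 * (M : ℝ) * δ) ∧
        (∀ j, ∀ U ∈ 𝒰 j, ∀ V ∈ 𝒰 j, U ≠ V → ∀ a ∈ U, ∀ b ∈ V, δ ≤ dist a b) := by
  have hMR : (1 : ℝ) ≤ (M : ℝ) := by exact_mod_cast hM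
  intro k
  induction k with
  | zero =>
    intro W D hL hcond
    classical
    rw [pow_zero, one_mul] at hcond
    -- diameter bound for components of W
    have hdiam : ∀ p q : X, p ∈ W → Rel δ W p q → dist p q ≤ 16 * (M : ℝ) * δ := by
      intro p q hp hrel
      by_contra hgt
      push_neg at hgt
      have hpts : ∀ j : Fin (8 * M + 1), ∃ pt, Rel δ W p pt ∧
          2 * ((j : ℕ) : ℝ) * δ ≤ dist p pt ∧ dist p pt < 2 * ((j : ℕ) : ℝ) * δ + δ := by
        intro j
        apply reach hδ hrel
        · positivity
        · have hj : ((j : ℕ) : ℝ) ≤ 8 * (M : ℝ) := by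
            have := Nat.lt_succ_iff.1 j.2
            exact_mod_cast this
          nlinarith
      choose pt h1 h2 h3 using hpts
      have hptW : ∀ j, pt j ∈ W := fun j => cpt_subset hp (h1 j)
      have hinj : Function.Injective pt := by
        intro j j' he
        by_contra hne
        have hjj : ((j : ℕ) : ℝ) ≠ ((j' : ℕ) : ℝ) := by
          simp only [ne_eq, Nat.cast_inj]
          exact fun h => hne (Fin.ext h)
        rcases lt_or_gt_of_ne hjj with h | h
        · have hc : ((j : ℕ) : ℝ) + 1 ≤ ((j' : ℕ) : ℝ) := by
            have : (j : ℕ) < (j' : ℕ) := by exact_mod_cast h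
            exact_mod_cast this
          have e1 := h3 j
          have e2 := h2 j'
          rw [he] at e1
          nlinarith
        · have hc : ((j' : ℕ) : ℝ) + 1 ≤ ((j : ℕ) : ℝ) := by
            have : (j' : ℕ) < (j : ℕ) := by exact_mod_cast h
            exact_mod_cast this
          have e1 := h3 j'
          have e2 := h2 j
          rw [he] at e2
          nlinarith
      set F : Finset X := Finset.univ.image pt with hF
      have hFcard : F.card = 8 * M + 1 := by
        rw [hF, Finset.card_image_of_injective _ hinj, Finset.card_univ, Fintype.card_fin]
      have hFmem : ∀ x ∈ F, x ∈ W ∧ x ∈ ball p (18 * (M : ℝ) * δ) := by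
        intro x hx
        rw [hF, Finset.mem_image] at hx
        obtain ⟨j, _, rfl⟩ := hx
        refine ⟨hptW j, ?_⟩
        rw [mem_ball, dist_comm]
        have e1 := h3 j
        have hj : ((j : ℕ) : ℝ) ≤ 8 * (M : ℝ) := by
          have := Nat.lt_succ_iff.1 j.2
          exact_mod_cast this
        nlinarith
      have hFsep : Sep δ F := by
        intro x hx x' hx' hne
        rw [hF, Finset.mem_image] at hx hx'
        obtain ⟨j, _, rfl⟩ := hx
        obtain ⟨j', _, rfl⟩ := hx'
        have hjj : ((j : ℕ) : ℝ) ≠ ((j' : ℕ) : ℝ) := by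
          simp only [ne_eq, Nat.cast_inj]
          exact fun h => hne (by rw [Fin.ext h])
        have habs := abs_dist_sub_le (pt j) (pt j') p
        rw [dist_comm (pt j) p, dist_comm (pt j') p] at habs
        rcases lt_or_gt_of_ne hjj with h | h
        · have hc : ((j : ℕ) : ℝ) + 1 ≤ ((j' : ℕ) : ℝ) := by
            have : (j : ℕ) < (j' : ℕ) := by exact_mod_cast h
            exact_mod_cast this
          have e1 := h3 j
          have e2 := h2 j'
          have := (abs_le.1 habs).1
          nlinarith
        · have hc : ((j' : ℕ) : ℝ) + 1 ≤ ((j : ℕ) : ℝ) := by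
            have : (j' : ℕ) < (j : ℕ) := by exact_mod_cast h
            exact_mod_cast this
          have e1 := h3 j'
          have e2 := h2 j
          have := (abs_le.1 habs).2
          nlinarith
      have hcount : (F.card : ℝ) ≤ (max C 1) * 24 ^ α * D := by
        refine count hα hC hR hA hδ (by positivity) ?_ ?_ ?_ hL p F hFmem hFsep
        · nlinarith
        · nlinarith
        · nlinarith
      rw [hFcard] at hcount
      push_cast at hcount
      linarith
    refine ⟨fun _ => {U | ∃ a, a ∈ W ∧ U = cpt δ W a}, ?_, ?_, ?_, ?_⟩
    · rintro j U ⟨a, ha, rfl⟩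
      exact cpt_subset ha
    · intro p hp
      exact ⟨0, cpt δ W p, ⟨p, hp, rfl⟩, mem_cpt_self δ W p⟩
    · rintro j U ⟨a, ha, rfl⟩ x hx y hy
      have hxW : x ∈ W := cpt_subset ha hx
      exact hdiam x y hxW ((rel_symm hx).trans hy)
    · rintro j U ⟨a, ha, rfl⟩ V ⟨b, hb, rfl⟩ hne x hx y hy
      exact cpt_sep ha hb hne hx hy
  | succ k ih =>
    intro W D hL hcond
    classical
    have hD0 : 0 ≤ D := by
      have := hL (Classical.arbitrary X) ∅ (by simp) (by intro x hx; simp at hx)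
      simpa using this
    obtain ⟨N, hNW, hNsep, hNcov⟩ := net W (4 * (M : ℝ) * δ) (by positivity)
    choose idx hidxM hidxL using fun z : X => light_shell hα hC hR hA M hM hδ hscale hL z
    set t₀ : X → ℝ := fun z => 4 * (M : ℝ) * δ + 4 * ((idx z : ℕ) : ℝ) * δ with ht₀def
    set Shell : X → Set X := fun z =>
      {x | x ∈ W ∧ dist x z ∈ Ico (t₀ z) (t₀ z + 2 * δ)} with hShelldef
    have hShellLight : ∀ z, Light δ (3 * (M : ℝ) * δ) (Shell z)
        ((max C 1) * 12 ^ α * D / M) := fun z => hidxL z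
    have ht₀ub : ∀ z, t₀ z + 2 * δ ≤ 8 * (M : ℝ) * δ - 2 * δ := by
      intro z
      have : ((idx z : ℕ) : ℝ) ≤ (M : ℝ) - 1 := by
        have h1 : (idx z : ℕ) + 1 ≤ M := hidxM z
        have := (Nat.cast_le (α := ℝ)).2 h1
        push_cast at this
        linarith
      simp only [ht₀def]
      nlinarith
    have ht₀lb : ∀ z, 4 * (M : ℝ) * δ ≤ t₀ z := by
      intro z
      simp only [ht₀def]
      have : (0 : ℝ) ≤ ((idx z : ℕ) : ℝ) := Nat.cast_nonneg _
      nlinarith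
    set Snext : Set X := ⋃ z ∈ N, Shell z with hSnextdef
    have hSW : Snext ⊆ W := by
      intro x hx
      rw [hSnextdef, mem_iUnion₂] at hx
      obtain ⟨z, _, hxz⟩ := hx
      exact hxz.1
    -- lightness of the union of chosen shells
    have hLS : Light δ (3 * (M : ℝ) * δ) Snext (((max C 1) * 12 ^ α) ^ 2 * D / M) := by
      intro y S hS hsep
      have hch : ∀ x ∈ S, ∃ z, z ∈ N ∧ x ∈ Shell z := by
        intro x hx
        have := (hS x hx).1
        rw [hSnextdef, mem_iUnion₂] at this
        obtain ⟨z, hz, hxz⟩ := this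
        exact ⟨z, hz, hxz⟩
      choose! g hg1 hg2 using hch
      have himg : ∀ x ∈ S, g x ∈ S.image g := fun x hx => Finset.mem_image_of_mem g hx
      have hfib := Finset.card_eq_sum_card_fiberwise (f := g) (s := S) (t := S.image g) himg
      have hfibb : ∀ w ∈ S.image g,
          ((S.filter (fun x => g x = w)).card : ℝ) ≤ (max C 1) * 12 ^ α * D / M := by
        intro w hw
        rw [Finset.mem_image] at hw
        obtain ⟨x₀, hx₀, rfl⟩ := hw
        refine hShellLight (g x₀) y (S.filter (fun x => g x = g x₀)) ?_ ?_
        · intro x hx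
          rw [Finset.mem_filter] at hx
          have := hg2 x hx.1
          rw [hx.2] at this
          exact ⟨this, (hS x hx.1).2⟩
        · intro x hx x' hx' hne
          rw [Finset.mem_filter] at hx hx'
          exact hsep x hx.1 x' hx'.1 hne
      have hMδ : (0:ℝ) < (M : ℝ) * δ := by positivity
      have himgcard : ((S.image g).card : ℝ) ≤ (max C 1) * 12 ^ α := by
        refine packb hα hC hR hA (r' := 4 * (M : ℝ) * δ) (ρ := 11 * (M : ℝ) * δ)
          (β := 12) (by positivity) (by nlinarith [hMδ]) (by nlinarith [hMδ, hscale])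
          (by nlinarith [hMδ]) y (S.image g) ?_ ?_
        · intro w hw
          rw [Finset.mem_image] at hw
          obtain ⟨x, hx, rfl⟩ := hw
          have hxSh := hg2 x hx
          have hd1 : dist x (g x) < t₀ (g x) + 2 * δ := hxSh.2.2
          have hub := ht₀ub (g x)
          have hd2 : dist x y < 3 * (M : ℝ) * δ := by
            have := (hS x hx).2
            rwa [mem_ball] at this
          rw [mem_ball]
          calc dist (g x) y ≤ dist (g x) x + dist x y := dist_triangle _ _ _
            _ < 11 * (M : ℝ) * δ := by
                rw [dist_comm (g x) x]
                nlinarith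
        · intro w hw w' hw' hne
          rw [Finset.mem_image] at hw hw'
          obtain ⟨x, hx, rfl⟩ := hw
          obtain ⟨x', hx', rfl⟩ := hw'
          exact hNsep (g x) (hg1 x hx) (g x') (hg1 x' hx') hne
      have hT0 : (0 : ℝ) ≤ (max C 1) * 12 ^ α * D / M := by
        have h1 : (0:ℝ) < max C 1 := lt_of_lt_of_le zero_lt_one (le_max_right C 1)
        have h2 : (0:ℝ) ≤ (12:ℝ) ^ α := le_of_lt (Real.rpow_pos_of_pos (by norm_num) α)
        positivity
      calc (S.card : ℝ) = ∑ w ∈ S.image g, ((S.filter (fun x => g x = w)).card : ℝ) := by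
            rw [hfib]; push_cast; ring
        _ ≤ ∑ _w ∈ S.image g, (max C 1) * 12 ^ α * D / M := Finset.sum_le_sum hfibb
        _ = ((S.image g).card : ℝ) * ((max C 1) * 12 ^ α * D / M) := by
            rw [Finset.sum_const, nsmul_eq_mul]
        _ ≤ ((max C 1) * 12 ^ α) * ((max C 1) * 12 ^ α * D / M) :=
            mul_le_mul_of_nonneg_right himgcard hT0
        _ = ((max C 1) * 12 ^ α) ^ 2 * D / M := by ring
    -- apply the induction hypothesis to Snext
    have hcond' : (max C 1) * 24 ^ α *
        ((((max C 1) * 12 ^ α) ^ 2 / M) ^ k * (((max C 1) * 12 ^ α) ^ 2 * D / M)) ≤ 8 * M := by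
      have heq : (((max C 1) * 12 ^ α) ^ 2 / M) ^ k * (((max C 1) * 12 ^ α) ^ 2 * D / M)
          = (((max C 1) * 12 ^ α) ^ 2 / M) ^ (k + 1) * D := by
        rw [pow_succ]
        ring
      rw [heq]
      exact hcond
    obtain ⟨𝒰, hsub, hcov, hdiam, hsepf⟩ := ih Snext (((max C 1) * 12 ^ α) ^ 2 * D / M) hLS hcond'
    -- new top family: components of W \ Snext
    set W' : Set X := W \ Snext with hW'def
    have hVdiam : ∀ a, a ∈ W' → ∀ x ∈ cpt δ W' a, ∀ y ∈ cpt δ W' a,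
        dist x y ≤ 16 * (M : ℝ) * δ := by
      intro a ha x hx y hy
      obtain ⟨z, hzN, hdz⟩ := hNcov a ha.1
      have hsh : ∀ x ∈ W', ¬(t₀ z ≤ dist x z ∧ dist x z < t₀ z + 2 * δ) := by
        intro u hu hcontra
        refine hu.2 ?_
        rw [hSnextdef, mem_iUnion₂]
        exact ⟨z, hzN, hu.1, hcontra⟩
      have hbase : dist a z < t₀ z := lt_of_lt_of_le hdz (ht₀lb z)
      have hxz : dist x z < t₀ z := confine hδ hsh hbase hx
      have hyz : dist y z < t₀ z := confine hδ hsh hbase hy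
      have hub := ht₀ub z
      calc dist x y ≤ dist x z + dist z y := dist_triangle _ _ _
        _ ≤ 16 * (M : ℝ) * δ := by
            rw [dist_comm z y]
            nlinarith
    refine ⟨Fin.cons {U | ∃ a, a ∈ W' ∧ U = cpt δ W' a} 𝒰, ?_, ?_, ?_, ?_⟩
    · intro j
      refine Fin.cases ?_ ?_ j
      · intro U hU
        rw [Fin.cons_zero] at hU
        obtain ⟨a, ha, rfl⟩ := hU
        exact (cpt_subset ha).trans (diff_subset)
      · intro i U hU
        rw [Fin.cons_succ] at hU
        exact (hsub i U hU).trans hSW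
    · intro p hp
      by_cases hpS : p ∈ Snext
      · obtain ⟨j, U, hU, hpU⟩ := hcov p hpS
        refine ⟨j.succ, U, ?_, hpU⟩
        rwa [Fin.cons_succ]
      · refine ⟨0, cpt δ W' p, ?_, mem_cpt_self δ W' p⟩
        rw [Fin.cons_zero]
        exact ⟨p, ⟨hp, hpS⟩, rfl⟩
    · intro j
      refine Fin.cases ?_ ?_ j
      · rintro U hU x hx y hy
        rw [Fin.cons_zero] at hU
        obtain ⟨a, ha, rfl⟩ := hU
        exact hVdiam a ha x hx y hy
      · intro i U hU
        rw [Fin.cons_succ] at hU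
        exact hdiam i U hU
    · intro j
      refine Fin.cases ?_ ?_ j
      · intro U hU V hV hne x hx y hy
        rw [Fin.cons_zero] at hU hV
        obtain ⟨a, ha, rfl⟩ := hU
        obtain ⟨b, hb, rfl⟩ := hV
        exact cpt_sep ha hb hne hx hy
      · intro i U hU V hV hne x hx y hy
        rw [Fin.cons_succ] at hU hV
        exact hsepf i U hU V hV hne x hx y hy


end LcDimAux

/-- If `dim_A(B(x,R),C,R) ≤ α` for every `x ∈ X`, then the linearly
controlled dimension of `X` is at most `⌊α⌋`. -/
theorem lc_dim_le_local_assouad {X : Type*} [MetricSpace X] (α C R : ℝ)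
    (hα : 0 ≤ α) (hC : 0 < C) (hR : 0 < R)
    (hA : ∀ x : X, dimAle (fun a b : X => dist a b) (Metric.ball x R) C R α) :
    ∃ c s₀ : ℝ, 0 < c ∧ 0 < s₀ ∧ ∀ s : ℝ, 0 < s → s < s₀ →
      dimNle (fun a b : X => dist a b) Set.univ c s (Nat.floor α) := by
  classical
  rcases isEmpty_or_nonempty X with hemp | hne
  · refine ⟨1, 1, one_pos, one_pos, fun s hs hs' => ?_⟩
    unfold dimNle
    refine ⟨fun _ => ∅, ?_, ?_, ?_, ?_⟩
    · intro k U hU; exact absurd hU (by simp)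
    · intro p _; exact isEmptyElim p
    · intro k U hU; exact absurd hU (by simp)
    · intro k U hU; exact absurd hU (by simp)
  · set n := Nat.floor α with hn
    set C₁ := max C 1 with hC₁
    have hC₁1 : (1:ℝ) ≤ C₁ := le_max_right C 1
    have hC₁0 : (0:ℝ) < C₁ := lt_of_lt_of_le zero_lt_one hC₁1
    have h12 : (0:ℝ) < (12:ℝ) ^ α := Real.rpow_pos_of_pos (by norm_num) α
    have h24 : (0:ℝ) < (24:ℝ) ^ α := Real.rpow_pos_of_pos (by norm_num) α
    set κ := (C₁ * 12 ^ α) ^ 2 with hκ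
    have hκ0 : (0:ℝ) < κ := by positivity
    set B := C₁ * 24 ^ α * (C₁ * 12 ^ α) * κ ^ n with hB
    have hB0 : (0:ℝ) < B := by positivity
    have he : (0:ℝ) < (n:ℝ) + 1 - α := by
      have h := Nat.lt_floor_add_one α
      rw [← hn] at h
      linarith
    set e := (n:ℝ) + 1 - α with heq
    set Mr := (max B 1) ^ (1/e) with hMrdef
    have hmax1 : (1:ℝ) ≤ max B 1 := le_max_right B 1
    have hMr1 : (1:ℝ) ≤ Mr := by
      rw [hMrdef]
      calc (1:ℝ) = (1:ℝ) ^ (1/e) := (Real.one_rpow _).symm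
        _ ≤ (max B 1) ^ (1/e) := Real.rpow_le_rpow zero_le_one hmax1 (by positivity)
    set M := ⌈Mr⌉₊ with hMdef
    have hMR : Mr ≤ (M:ℝ) := Nat.le_ceil Mr
    have hMcast : (1:ℝ) ≤ (M:ℝ) := le_trans hMr1 hMR
    have hMpos : (0:ℝ) < (M:ℝ) := lt_of_lt_of_le zero_lt_one hMcast
    have hMne : (M:ℝ) ≠ 0 := ne_of_gt hMpos
    have hM1 : 1 ≤ M := by exact_mod_cast hMcast
    have hMe : B ≤ (M:ℝ) ^ e := by
      calc B ≤ max B 1 := le_max_left _ _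
        _ = ((max B 1) ^ (1/e)) ^ e := by
            rw [← Real.rpow_mul (le_trans zero_le_one hmax1),
              one_div_mul_cancel (ne_of_gt he), Real.rpow_one]
        _ ≤ (M:ℝ) ^ e := Real.rpow_le_rpow (by positivity) hMR (le_of_lt he)
    have hcondM : B * ((M:ℝ) ^ α / (M:ℝ) ^ (n : ℕ)) ≤ 8 * (M:ℝ) := by
      have h1 : (M:ℝ) ^ α / (M:ℝ) ^ (n:ℕ) = (M:ℝ) ^ (α - (n:ℝ)) := by
        rw [← Real.rpow_natCast (M:ℝ) n, ← Real.rpow_sub hMpos]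
      rw [h1]
      have hpow0 : (0:ℝ) ≤ (M:ℝ) ^ (α - (n:ℝ)) := le_of_lt (Real.rpow_pos_of_pos hMpos _)
      have h2 : B * (M:ℝ) ^ (α - (n:ℝ)) ≤ (M:ℝ) ^ e * (M:ℝ) ^ (α - (n:ℝ)) :=
        mul_le_mul_of_nonneg_right hMe hpow0
      have h3 : (M:ℝ) ^ e * (M:ℝ) ^ (α - (n:ℝ)) = (M:ℝ) := by
        rw [← Real.rpow_add hMpos]
        have h4 : e + (α - (n:ℝ)) = 1 := by rw [heq]; ring
        rw [h4, Real.rpow_one]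
      rw [h3] at h2
      linarith
    refine ⟨1/(16*(M:ℝ)), R/3, by positivity, by positivity, fun s hs hss => ?_⟩
    set δ := (1/(16*(M:ℝ))) * s with hδdef
    have hδ : 0 < δ := by rw [hδdef]; positivity
    have hscale : 36 * (M:ℝ) * δ < R := by
      rw [hδdef]
      have h1 : 36*(M:ℝ)*((1/(16*(M:ℝ)))*s) = (9/4)*s := by field_simp; ring
      rw [h1]
      linarith
    have hLuniv : LcDimAux.Light δ (3*(M:ℝ)*δ) (univ : Set X) (C₁ * (12*(M:ℝ)) ^ α) := by
      intro y S hS hsep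
      have hMδ : (0:ℝ) < (M:ℝ)*δ := by positivity
      refine LcDimAux.packb hα hC hR hA (r' := δ) (ρ := 3*(M:ℝ)*δ) (β := 12*(M:ℝ))
        hδ ?_ ?_ ?_ y S (fun x hx => (hS x hx).2) (fun x hx x' hx' hne => hsep x hx x' hx' hne)
      · nlinarith
      · nlinarith
      · nlinarith
    have hcond : C₁ * 24 ^ α * ((κ/(M:ℝ)) ^ n * (C₁*(12*(M:ℝ)) ^ α)) ≤ 8*(M:ℝ) := by
      have h1 : ((12:ℝ)*(M:ℝ)) ^ α = 12 ^ α * (M:ℝ) ^ α :=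
        Real.mul_rpow (by norm_num) (le_of_lt hMpos)
      have h2 : (κ/(M:ℝ)) ^ n = κ ^ n/((M:ℝ)) ^ (n:ℕ) := div_pow κ (M:ℝ) n
      rw [h1, h2]
      calc C₁ * 24 ^ α * (κ ^ n/(M:ℝ) ^ (n:ℕ) * (C₁*(12 ^ α*(M:ℝ) ^ α)))
          = B * ((M:ℝ) ^ α / (M:ℝ) ^ (n:ℕ)) := by rw [hB]; ring
        _ ≤ 8*(M:ℝ) := hcondM
    obtain ⟨𝒰, hsub, hcov, hdiam, hsepf⟩ :=
      LcDimAux.main_construction hα hC hR hA M hM1 hδ hscale n univ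
        (C₁*(12*(M:ℝ)) ^ α) hLuniv hcond
    have h16 : 16*(M:ℝ)*δ = s := by
      rw [hδdef]
      field_simp
    unfold dimNle
    refine ⟨𝒰, fun k U _ => subset_univ U, fun p _ => hcov p (mem_univ p), ?_, ?_⟩
    · intro k U hU a ha b hb
      have := hdiam k U hU a ha b hb
      rwa [h16] at this
    · intro k U hU V hV hne a ha b hb
      have h := hsepf k U hU V hV hne a ha b hb
      show 1/(16*(M:ℝ)) * s ≤ dist a b
      rw [← hδdef]
      exact h
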